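/- For 0 < R < 1/64, the derivative of F(R) = (3 - 2√(1-64R))/(32R) + (-1 + √(1-64R))/(1024R²) - 3/2 equals (−1024R² − 48R√(1−64R) + 80R + √(1−64R) − 1)/(512R³√(1−64R)), and this derivative is nonnegative on (0, 1/64). -/

import Mathlib

noncomputable def areaRatio (R : ℝ) : ℝ :=
  (3 - 2 * Real.sqrt (1 - 64 * R)) / (32 * R) +
  (-1 + Real.sqrt (1 - 64 * R)) / (1024 * R^2) - 3/2

theorem areaRatio_deriv (R : ℝ) (h0 : 0 < R) (h1 : R < 1/64) :
    HasDerivAt areaRatio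
      ((-1024 * R^2 - 48 * R * Real.sqrt (1 - 64 * R) + 80 * R +
        Real.sqrt (1 - 64 * R) - 1) / (512 * R^3 * Real.sqrt (1 - 64 * R))) R ∧
    0 ≤ (-1024 * R^2 - 48 * R * Real.sqrt (1 - 64 * R) + 80 * R +
        Real.sqrt (1 - 64 * R) - 1) / (512 * R^3 * Real.sqrt (1 - 64 * R)) := by
  have hx : (0:ℝ) < 1 - 64 * R := by linarith
  set s := Real.sqrt (1 - 64 * R) with hs_def
  have hs_pos : 0 < s := Real.sqrt_pos.mpr hx
  have hs2 : s ^ 2 = 1 - 64 * R := Real.sq_sqrt hx.le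
  have hs_lt : s < 1 := by nlinarith [hs2]
  have hRne : R ≠ 0 := ne_of_gt h0
  have hd1 : HasDerivAt (fun x : ℝ => 1 - 64 * x) (-64) R := by
    simpa using ((hasDerivAt_id R).const_mul (64:ℝ)).const_sub 1
  have hsqrt : HasDerivAt (fun x : ℝ => Real.sqrt (1 - 64 * x)) (1 / (2 * s) * (-64)) R :=
    (Real.hasDerivAt_sqrt (ne_of_gt hx)).comp R hd1
  have hnum1 : HasDerivAt (fun x : ℝ => 3 - 2 * Real.sqrt (1 - 64 * x))
      (-(2 * (1 / (2 * s) * (-64)))) R := (hsqrt.const_mul 2).const_sub 3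
  have hden1 : HasDerivAt (fun x : ℝ => 32 * x) 32 R := by
    simpa using (hasDerivAt_id R).const_mul (32:ℝ)
  have hden1ne : (32:ℝ) * R ≠ 0 := by positivity
  have ht1 := hnum1.div hden1 hden1ne
  have hnum2 : HasDerivAt (fun x : ℝ => -1 + Real.sqrt (1 - 64 * x))
      (1 / (2 * s) * (-64)) R := hsqrt.const_add (-1)
  have hden2 : HasDerivAt (fun x : ℝ => 1024 * x ^ 2) (1024 * (2 * R)) R := by
    simpa using ((hasDerivAt_pow 2 R).const_mul (1024:ℝ))
  have hden2ne : (1024:ℝ) * R ^ 2 ≠ 0 := by positivity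
  have ht2 := hnum2.div hden2 hden2ne
  have hall := (ht1.add ht2).sub_const (3/2)
  constructor
  · have heq : areaRatio = fun x : ℝ =>
        (3 - 2 * Real.sqrt (1 - 64 * x)) / (32 * x) +
        (-1 + Real.sqrt (1 - 64 * x)) / (1024 * x ^ 2) - 3/2 := rfl
    rw [heq]
    refine hall.congr_deriv ?_
    symm
    rw [← hs_def]
    have hsne : s ≠ 0 := ne_of_gt hs_pos
    field_simp
    linear_combination ((4294967296:ℝ) * R^6 * s^2 - 137438953472 * R^7 * s^2 + (65536 - 4294967296 * R^6 * s^2) * (1 - 32 * R)) * hs2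
  · apply div_nonneg
    · have hR : R = (1 - s ^ 2) / 64 := by linarith
      have key : -1024 * R ^ 2 - 48 * R * s + 80 * R + s - 1 = s * (1 - s) ^ 3 / 4 := by
        rw [hR]; ring
      rw [key]
      have h1s : (0:ℝ) ≤ 1 - s := by linarith
      exact div_nonneg (mul_nonneg hs_pos.le (pow_nonneg h1s 3)) (by norm_num)
    · positivity
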